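/- For every reduced symbol (A,B) with A ∪ B nonempty, the maximum value satisfies max(A,B) ≤ rank(A,B). -/

import Mathlib

open Matrix CategoryTheory

noncomputable section

section Aux

lemma my_fdiv_eq_ediv (n : ℤ) (h : 0 ≤ n) : n.fdiv 4 = n / 4 := by
  obtain ⟨m, rfl⟩ := Int.eq_ofNat_of_zero_le h
  cases m <;> rfl

lemma my_fdiv_le (n T : ℤ) (h : n ^ 2 ≤ 4 * T + 1) : Int.fdiv (n ^ 2) 4 ≤ T := by
  rw [my_fdiv_eq_ediv _ (sq_nonneg n)]
  have h0 : 0 ≤ n ^ 2 := sq_nonneg n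
  set k := n ^ 2
  omega

lemma my_sum_lb (s : Finset ℕ) (c : ℕ) (h : ∀ x ∈ s, c ≤ x) :
    ∑ i ∈ Finset.range s.card, (i + c) ≤ ∑ x ∈ s, x := by
  induction s using Finset.induction_on_max with
  | empty => simp
  | insert a s hlt ih =>
    have ha : a ∉ s := fun hmem => lt_irrefl a (hlt a hmem)
    have hsub : s ⊆ Finset.Ico c a := by
      intro x hx
      exact Finset.mem_Ico.mpr ⟨h x (Finset.mem_insert_of_mem hx), hlt x hx⟩
    have hcard : s.card ≤ a - c := by
      simpa using Finset.card_le_card hsub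
    have hca : c ≤ a := h a (Finset.mem_insert_self a s)
    rw [Finset.card_insert_of_notMem ha, Finset.sum_insert ha, Finset.sum_range_succ]
    have := ih (fun x hx => h x (Finset.mem_insert_of_mem hx))
    omega

lemma my_gauss (n c : ℕ) :
    2 * ∑ i ∈ Finset.range n, ((i : ℤ) + c) = n * (n - 1) + 2 * n * c := by
  induction n with
  | zero => simp
  | succ k ih =>
    rw [Finset.sum_range_succ]
    push_cast
    push_cast at ih
    linarith

lemma my_sum_lb_int (s : Finset ℕ) (c : ℕ) (h : ∀ x ∈ s, c ≤ x) :
    (s.card : ℤ) * (s.card - 1) + 2 * s.card * c ≤ 2 * ∑ x ∈ s, (x : ℤ) := by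
  rw [← my_gauss s.card c]
  have h1 : ((∑ i ∈ Finset.range s.card, (i + c) : ℕ) : ℤ) ≤ ((∑ x ∈ s, x : ℕ) : ℤ) := by
    exact_mod_cast my_sum_lb s c h
  push_cast at h1
  linarith

lemma my_core (A B : Finset ℕ) (m : ℕ) (hm : m ∈ A) (hred : 0 ∉ A ∨ 0 ∉ B) :
    (m : ℤ) ≤ (∑ a ∈ A, (a : ℤ)) + (∑ b ∈ B, (b : ℤ)) -
      Int.fdiv (((A.card : ℤ) + (B.card : ℤ) - 1) ^ 2) 4 := by
  have hsum : (m : ℤ) + ∑ x ∈ A.erase m, (x : ℤ) = ∑ a ∈ A, (a : ℤ) :=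
    Finset.add_sum_erase A _ hm
  have hcard : (A.erase m).card + 1 = A.card := Finset.card_erase_add_one hm
  set p : ℤ := (A.card : ℤ) with hp
  set q : ℤ := (B.card : ℤ) with hq
  have hpc : ((A.erase m).card : ℤ) = p - 1 := by
    rw [hp]
    omega
  set SA : ℤ := ∑ x ∈ A.erase m, (x : ℤ) with hSA
  set SB : ℤ := ∑ x ∈ B, (x : ℤ) with hSB
  have key : (p + q - 1) ^ 2 ≤ 4 * (SA + SB) + 1 := by
    rcases hred with h0 | h0
    · have b1 := my_sum_lb_int (A.erase m) 1 (by
        intro x hx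
        have hxA : x ∈ A := Finset.mem_of_mem_erase hx
        have : x ≠ 0 := fun h => h0 (h ▸ hxA)
        omega)
      have b2 := my_sum_lb_int B 0 (fun x _ => Nat.zero_le x)
      rw [hpc] at b1
      push_cast at b1 b2
      rw [← hSA] at b1
      rw [← hSB] at b2
      rw [show ((B.card : ℕ) : ℤ) = q from rfl] at b2
      nlinarith [sq_nonneg (p - q)]
    · have b1 := my_sum_lb_int (A.erase m) 0 (fun x _ => Nat.zero_le x)
      have b2 := my_sum_lb_int B 1 (by
        intro x hx
        have : x ≠ 0 := fun h => h0 (h ▸ hx)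
        omega)
      rw [hpc] at b1
      push_cast at b1 b2
      rw [← hSA] at b1
      rw [← hSB] at b2
      rw [show ((B.card : ℕ) : ℤ) = q from rfl] at b2
      nlinarith [sq_nonneg (p - q - 2)]
  have hf := my_fdiv_le (p + q - 1) (SA + SB) key
  linarith

end Aux

/-- The rank of a symbol `(A, B)`:
`Σ_{a∈A} a + Σ_{b∈B} b − ⌊(|A|+|B|−1)²/4⌋`. -/
def symRank (A B : Finset ℕ) : ℤ :=
  (∑ a ∈ A, (a : ℤ)) + (∑ b ∈ B, (b : ℤ)) -
    Int.fdiv (((A.card : ℤ) + (B.card : ℤ) - 1) ^ 2) 4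

/-- The maximum value of a symbol `(A, B)`: the largest element of `A ∪ B`. -/
def symMax (A B : Finset ℕ) : ℤ := (((A ∪ B).sup id : ℕ) : ℤ)

/-- The defect of a symbol `(A, B)`: `|A| − |B|`. -/
def symDef (A B : Finset ℕ) : ℤ := (A.card : ℤ) - (B.card : ℤ)

/-- The level of a symbol `(A, B)`: `rank − max + ⌊(|A|+|B|−1)/2⌋`. -/
def symLev (A B : Finset ℕ) : ℤ :=
  symRank A B - symMax A B + Int.fdiv ((A.card : ℤ) + (B.card : ℤ) - 1) 2

/-- For every reduced symbol `(A,B)` with `A ∪ B` nonempty, `max(A,B) ≤ rank(A,B)`. -/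
theorem symbol_max_le_rank (A B : Finset ℕ) (hred : 0 ∉ A ∨ 0 ∉ B)
    (hne : (A ∪ B).Nonempty) :
    symMax A B ≤ symRank A B := by
  obtain ⟨b, hb, hsup⟩ := Finset.exists_mem_eq_sup (A ∪ B) hne id
  have hmax : symMax A B = (b : ℤ) := by
    simp [symMax, hsup]
  rw [hmax]
  rcases Finset.mem_union.mp hb with hbA | hbB
  · exact my_core A B b hbA hred
  · have h := my_core B A b hbB hred.symm
    have heq : (∑ a ∈ B, (a : ℤ)) + (∑ x ∈ A, (x : ℤ)) -
        Int.fdiv (((B.card : ℤ) + (A.card : ℤ) - 1) ^ 2) 4 = symRank A B := by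
      unfold symRank
      rw [show ((B.card : ℤ) + (A.card : ℤ) - 1) = ((A.card : ℤ) + (B.card : ℤ) - 1) by ring]
      ring
    rw [← heq]
    exact h
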